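/- For every p ∈ [1/2, 1], the parametric triplet (respectively quartet) distance d^(p) is a metric on the set of all rooted (respectively unrooted) phylogenies over a fixed taxon set: it is a distance measure and satisfies d^(p)(T1,T3) ≤ d^(p)(T1,T2) + d^(p)(T2,T3) for all trees T1, T2, T3. -/

import Mathlib

open Finset

attribute [local instance] Classical.propDecidable

/-- A rooted phylogenetic tree over the taxon set `Fin n`, encoded by its hierarchy of
clusters: for each node of the tree, the set of leaves descending from that node.
The conditions say that the whole leaf set and all singletons are clusters, the empty
set is not a cluster, and that the family is laminar.  Such families correspond exactly
to rooted phylogenies in which every internal node has at least two children. -/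
structure RTree (n : ℕ) where
  clusters : Finset (Finset (Fin n))
  univ_mem : Finset.univ ∈ clusters
  singleton_mem : ∀ x : Fin n, {x} ∈ clusters
  empty_not_mem : ∅ ∉ clusters
  laminar : ∀ C ∈ clusters, ∀ D ∈ clusters, C ⊆ D ∨ D ⊆ C ∨ C ∩ D = ∅

/-- All triplets (3-element subsets) of `Fin n`. -/
def triplets (n : ℕ) : Finset (Finset (Fin n)) :=
  Finset.powersetCard 3 Finset.univ

/-- The cluster family of the restriction `T|X`, for a rooted tree with cluster
family `F`: the nonempty intersections of clusters with `X`. -/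
noncomputable def famRestrict {n : ℕ} (F : Finset (Finset (Fin n))) (X : Finset (Fin n)) :
    Finset (Finset (Fin n)) :=
  (F.image (· ∩ X)).filter (· ≠ ∅)

/-- A triplet `X` is resolved in a rooted tree with cluster family `F` iff the
restriction `T|X` is fully resolved, equivalently iff some cluster contains exactly
two of the three elements of `X`. -/
def famResolved {n : ℕ} (F : Finset (Finset (Fin n))) (X : Finset (Fin n)) : Prop :=
  ∃ C ∈ F, (C ∩ X).card = 2

/-- Triplets resolved, identically, in both trees. -/
noncomputable def famSetS {n : ℕ} (F G : Finset (Finset (Fin n))) :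
    Finset (Finset (Fin n)) :=
  (triplets n).filter fun X =>
    famResolved F X ∧ famResolved G X ∧ famRestrict F X = famRestrict G X

/-- Triplets resolved, differently, in both trees. -/
noncomputable def famSetD {n : ℕ} (F G : Finset (Finset (Fin n))) :
    Finset (Finset (Fin n)) :=
  (triplets n).filter fun X =>
    famResolved F X ∧ famResolved G X ∧ famRestrict F X ≠ famRestrict G X

/-- Triplets resolved in the first tree but not in the second. -/
noncomputable def famSetR1 {n : ℕ} (F G : Finset (Finset (Fin n))) :
    Finset (Finset (Fin n)) :=
  (triplets n).filter fun X => famResolved F X ∧ ¬ famResolved G X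

/-- Triplets resolved in the second tree but not in the first. -/
noncomputable def famSetR2 {n : ℕ} (F G : Finset (Finset (Fin n))) :
    Finset (Finset (Fin n)) :=
  (triplets n).filter fun X => famResolved G X ∧ ¬ famResolved F X

/-- Triplets unresolved in both trees. -/
noncomputable def famSetU {n : ℕ} (F G : Finset (Finset (Fin n))) :
    Finset (Finset (Fin n)) :=
  (triplets n).filter fun X => ¬ famResolved F X ∧ ¬ famResolved G X

/-- The parametric triplet distance, at the level of cluster families. -/
noncomputable def famPdist {n : ℕ} (p : ℝ) (F G : Finset (Finset (Fin n))) : ℝ :=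
  ((famSetD F G).card : ℝ) +
    p * (((famSetR1 F G).card : ℝ) + ((famSetR2 F G).card : ℝ))

namespace RTree

variable {n : ℕ}

/-- The cluster family of the restriction `T|X`. -/
noncomputable def restrict (T : RTree n) (X : Finset (Fin n)) : Finset (Finset (Fin n)) :=
  famRestrict T.clusters X

/-- The triplet `X` is resolved in `T`, i.e. `T|X` is fully resolved. -/
def Resolved (T : RTree n) (X : Finset (Fin n)) : Prop :=
  famResolved T.clusters X

/-- A rooted phylogeny is fully resolved (all internal nodes have exactly two
children) iff every triplet is resolved in it. -/
def FullyResolved (T : RTree n) : Prop :=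
  ∀ X ∈ triplets n, T.Resolved X

noncomputable def setS (T₁ T₂ : RTree n) : Finset (Finset (Fin n)) :=
  famSetS T₁.clusters T₂.clusters

noncomputable def setD (T₁ T₂ : RTree n) : Finset (Finset (Fin n)) :=
  famSetD T₁.clusters T₂.clusters

noncomputable def setR1 (T₁ T₂ : RTree n) : Finset (Finset (Fin n)) :=
  famSetR1 T₁.clusters T₂.clusters

noncomputable def setR2 (T₁ T₂ : RTree n) : Finset (Finset (Fin n)) :=
  famSetR2 T₁.clusters T₂.clusters

noncomputable def setU (T₁ T₂ : RTree n) : Finset (Finset (Fin n)) :=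
  famSetU T₁.clusters T₂.clusters

/-- The parametric triplet distance `d⁽ᵖ⁾(T₁,T₂)`. -/
noncomputable def pdist (p : ℝ) (T₁ T₂ : RTree n) : ℝ :=
  famPdist p T₁.clusters T₂.clusters

theorem clusters_injective : Function.Injective (clusters (n := n)) := by
  rintro ⟨s₁, _, _, _, _⟩ ⟨s₂, _, _, _, _⟩ h
  simp only [mk.injEq] at h ⊢
  exact h

noncomputable instance : Fintype (RTree n) :=
  Fintype.ofInjective clusters clusters_injective

end RTree

/-- An unrooted phylogenetic tree over the taxon set `Fin n`, encoded by its split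
system: the collection of all sets of leaves lying on one side of some edge of the
tree.  By the splits-equivalence (Buneman) theorem, the families satisfying these
conditions (all trivial splits present, closure under complementation, pairwise
compatibility) correspond exactly to unrooted phylogenies in which every internal
node has degree at least three. -/
structure UTree (n : ℕ) where
  splits : Finset (Finset (Fin n))
  empty_not_mem : ∅ ∉ splits
  trivial_mem : ∀ x : Fin n, ({x} : Finset (Fin n)) = Finset.univ ∨ {x} ∈ splits
  compl_mem : ∀ A ∈ splits, Finset.univ \ A ∈ splits
  compat : ∀ A ∈ splits, ∀ B ∈ splits, A ⊆ B ∨ B ⊆ A ∨ A ∩ B = ∅ ∨ A ∪ B = Finset.univ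

/-- All quartets (4-element subsets) of `Fin n`. -/
def quartets (n : ℕ) : Finset (Finset (Fin n)) :=
  Finset.powersetCard 4 Finset.univ

/-- The split system of the restriction `T|X`, for an unrooted tree with split
system `F`: the proper nonempty intersections of split sides with `X`. -/
noncomputable def famRestrictU {n : ℕ} (F : Finset (Finset (Fin n))) (X : Finset (Fin n)) :
    Finset (Finset (Fin n)) :=
  (F.image (· ∩ X)).filter fun A => A ≠ ∅ ∧ A ≠ X

/-- A quartet `X` is resolved in an unrooted tree with split system `F` iff the
restriction `T|X` is fully resolved, equivalently iff some split side contains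
exactly two of the four elements of `X`. -/
def famResolvedU {n : ℕ} (F : Finset (Finset (Fin n))) (X : Finset (Fin n)) : Prop :=
  ∃ A ∈ F, (A ∩ X).card = 2

/-- Quartets resolved, identically, in both trees. -/
noncomputable def famSetSU {n : ℕ} (F G : Finset (Finset (Fin n))) :
    Finset (Finset (Fin n)) :=
  (quartets n).filter fun X =>
    famResolvedU F X ∧ famResolvedU G X ∧ famRestrictU F X = famRestrictU G X

/-- Quartets resolved, differently, in both trees. -/
noncomputable def famSetDU {n : ℕ} (F G : Finset (Finset (Fin n))) :
    Finset (Finset (Fin n)) :=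
  (quartets n).filter fun X =>
    famResolvedU F X ∧ famResolvedU G X ∧ famRestrictU F X ≠ famRestrictU G X

/-- Quartets resolved in the first tree but not in the second. -/
noncomputable def famSetR1U {n : ℕ} (F G : Finset (Finset (Fin n))) :
    Finset (Finset (Fin n)) :=
  (quartets n).filter fun X => famResolvedU F X ∧ ¬ famResolvedU G X

/-- Quartets resolved in the second tree but not in the first. -/
noncomputable def famSetR2U {n : ℕ} (F G : Finset (Finset (Fin n))) :
    Finset (Finset (Fin n)) :=
  (quartets n).filter fun X => famResolvedU G X ∧ ¬ famResolvedU F X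

/-- Quartets unresolved in both trees. -/
noncomputable def famSetUU {n : ℕ} (F G : Finset (Finset (Fin n))) :
    Finset (Finset (Fin n)) :=
  (quartets n).filter fun X => ¬ famResolvedU F X ∧ ¬ famResolvedU G X

/-- The parametric quartet distance, at the level of split systems. -/
noncomputable def famPdistU {n : ℕ} (p : ℝ) (F G : Finset (Finset (Fin n))) : ℝ :=
  ((famSetDU F G).card : ℝ) +
    p * (((famSetR1U F G).card : ℝ) + ((famSetR2U F G).card : ℝ))

namespace UTree

variable {n : ℕ}

/-- The split system of the restriction `T|X`. -/
noncomputable def restrict (T : UTree n) (X : Finset (Fin n)) : Finset (Finset (Fin n)) :=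
  famRestrictU T.splits X

/-- The quartet `X` is resolved in `T`, i.e. `T|X` is fully resolved. -/
def Resolved (T : UTree n) (X : Finset (Fin n)) : Prop :=
  famResolvedU T.splits X

/-- An unrooted phylogeny is fully resolved (all internal nodes have degree exactly
three) iff every quartet is resolved in it. -/
def FullyResolved (T : UTree n) : Prop :=
  ∀ X ∈ quartets n, T.Resolved X

noncomputable def setS (T₁ T₂ : UTree n) : Finset (Finset (Fin n)) :=
  famSetSU T₁.splits T₂.splits

noncomputable def setD (T₁ T₂ : UTree n) : Finset (Finset (Fin n)) :=
  famSetDU T₁.splits T₂.splits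

noncomputable def setR1 (T₁ T₂ : UTree n) : Finset (Finset (Fin n)) :=
  famSetR1U T₁.splits T₂.splits

noncomputable def setR2 (T₁ T₂ : UTree n) : Finset (Finset (Fin n)) :=
  famSetR2U T₁.splits T₂.splits

noncomputable def setU (T₁ T₂ : UTree n) : Finset (Finset (Fin n)) :=
  famSetUU T₁.splits T₂.splits

/-- The parametric quartet distance `d⁽ᵖ⁾(T₁,T₂)`. -/
noncomputable def pdist (p : ℝ) (T₁ T₂ : UTree n) : ℝ :=
  famPdistU p T₁.splits T₂.splits

theorem splits_injective : Function.Injective (splits (n := n)) := by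
  rintro ⟨s₁, _, _, _, _⟩ ⟨s₂, _, _, _, _⟩ h
  simp only [mk.injEq] at h ⊢
  exact h

noncomputable instance : Fintype (UTree n) :=
  Fintype.ofInjective splits splits_injective

end UTree

section AuxMetric

open Finset

variable {n : ℕ}

/-! ### Generic helpers -/

lemma exists_min_subset {α : Type*} [DecidableEq α] (s : Finset (Finset α)) (hne : s.Nonempty)
    (hch : ∀ D ∈ s, ∀ E ∈ s, D ⊆ E ∨ E ⊆ D) : ∃ m ∈ s, ∀ D ∈ s, m ⊆ D := by
  obtain ⟨m, hm, hmin⟩ := s.exists_min_image Finset.card hne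
  refine ⟨m, hm, fun D hD => ?_⟩
  rcases hch m hm D hD with h | h
  · exact h
  · have e := Finset.eq_of_subset_of_card_le h (hmin D hD)
    rw [e]

lemma exists_max_subset {α : Type*} [DecidableEq α] (s : Finset (Finset α)) (hne : s.Nonempty)
    (hch : ∀ D ∈ s, ∀ E ∈ s, D ⊆ E ∨ E ⊆ D) : ∃ M ∈ s, ∀ D ∈ s, D ⊆ M := by
  obtain ⟨M, hM, hmax⟩ := s.exists_max_image Finset.card hne
  refine ⟨M, hM, fun D hD => ?_⟩
  rcases hch M hM D hD with h | h
  · have e := Finset.eq_of_subset_of_card_le h (hmax D hD)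
    rw [e]
  · exact h

lemma ind_tri {β : Type*} (p : ℝ) (hp0 : 1/2 ≤ p) (hp1 : p ≤ 1) (A B C : Prop) (x y z : β)
    [Decidable (A ∧ C ∧ x ≠ z)] [Decidable (A ∧ ¬C)] [Decidable (C ∧ ¬A)]
    [Decidable (A ∧ B ∧ x ≠ y)] [Decidable (A ∧ ¬B)] [Decidable (B ∧ ¬A)]
    [Decidable (B ∧ C ∧ y ≠ z)] [Decidable (B ∧ ¬C)] [Decidable (C ∧ ¬B)] :
    (if A ∧ C ∧ x ≠ z then (1:ℝ) else 0)
      + p * ((if A ∧ ¬C then (1:ℝ) else 0) + (if C ∧ ¬A then (1:ℝ) else 0))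
    ≤ ((if A ∧ B ∧ x ≠ y then (1:ℝ) else 0)
        + p * ((if A ∧ ¬B then (1:ℝ) else 0) + (if B ∧ ¬A then (1:ℝ) else 0)))
      + ((if B ∧ C ∧ y ≠ z then (1:ℝ) else 0)
        + p * ((if B ∧ ¬C then (1:ℝ) else 0) + (if C ∧ ¬B then (1:ℝ) else 0))) := by
  by_cases hA : A <;> by_cases hB : B <;> by_cases hC : C <;>
    by_cases hxy : x = y <;> by_cases hyz : y = z <;> by_cases hxz : x = z <;>
    simp_all <;> linarith

lemma card_filter_real {ι : Type*} (Ω : Finset ι) (q : ι → Prop) [DecidablePred q] :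
    ((Ω.filter q).card : ℝ) = ∑ X ∈ Ω, if q X then (1:ℝ) else 0 := by
  rw [Finset.card_filter]
  push_cast
  rfl

lemma zero_aux {p a b c : ℝ} (hp : 0 < p) (ha : 0 ≤ a) (hb : 0 ≤ b) (hc : 0 ≤ c)
    (h : a + p * (b + c) = 0) : a = 0 ∧ b = 0 ∧ c = 0 := by
  have hbc : 0 ≤ p * (b + c) := mul_nonneg hp.le (by linarith)
  have ha0 : a = 0 := by linarith
  have h' : p * (b + c) = 0 := by linarith
  have hbc0 : b + c = 0 := by
    rcases mul_eq_zero.mp h' with h'' | h''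
    · exact absurd h'' hp.ne'
    · exact h''
  exact ⟨ha0, by linarith, by linarith⟩

/-! ### Rooted case -/

lemma inter_triplet_eq_pair {D : Finset (Fin n)} {a b c : Fin n}
    (haD : a ∈ D) (hbD : b ∈ D) (hcD : c ∉ D) :
    D ∩ {a, b, c} = {a, b} := by
  ext x
  simp only [Finset.mem_inter, Finset.mem_insert, Finset.mem_singleton]
  constructor
  · rintro ⟨hxD, rfl | rfl | rfl⟩
    · exact Or.inl rfl
    · exact Or.inr rfl
    · exact absurd hxD hcD
  · rintro (rfl | rfl)
    · exact ⟨haD, Or.inl rfl⟩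
    · exact ⟨hbD, Or.inr (Or.inl rfl)⟩

lemma pair_mem_famRestrict {F : Finset (Finset (Fin n))} {a b c : Fin n}
    (hc : c ∉ ({a, b} : Finset (Fin n))) :
    ({a, b} : Finset (Fin n)) ∈ famRestrict F {a, b, c} ↔
      ∃ D ∈ F, a ∈ D ∧ b ∈ D ∧ c ∉ D := by
  unfold famRestrict
  simp only [Finset.mem_filter, Finset.mem_image]
  constructor
  · rintro ⟨⟨D, hD, hDX⟩, -⟩
    refine ⟨D, hD, ?_, ?_, fun hcD => ?_⟩
    · have h' : a ∈ D ∩ ({a, b, c} : Finset (Fin n)) := by rw [hDX]; simp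
      exact (Finset.mem_inter.mp h').1
    · have h' : b ∈ D ∩ ({a, b, c} : Finset (Fin n)) := by rw [hDX]; simp
      exact (Finset.mem_inter.mp h').1
    · have h' : c ∈ D ∩ ({a, b, c} : Finset (Fin n)) := Finset.mem_inter.mpr ⟨hcD, by simp⟩
      rw [hDX] at h'
      exact hc h'
  · rintro ⟨D, hD, haD, hbD, hcD⟩
    exact ⟨⟨D, hD, inter_triplet_eq_pair haD hbD hcD⟩, by simp⟩

lemma famResolved_of_witness {F : Finset (Finset (Fin n))} {a b c : Fin n} (hab : a ≠ b)
    (hW : ∃ D ∈ F, a ∈ D ∧ b ∈ D ∧ c ∉ D) : famResolved F {a, b, c} := by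
  obtain ⟨D, hD, haD, hbD, hcD⟩ := hW
  exact ⟨D, hD, by rw [inter_triplet_eq_pair haD hbD hcD, Finset.card_pair hab]⟩

lemma triplet_mem {a b c : Fin n} (hab : a ≠ b) (hc : c ∉ ({a, b} : Finset (Fin n))) :
    ({a, b, c} : Finset (Fin n)) ∈ triplets n := by
  simp only [Finset.mem_insert, Finset.mem_singleton] at hc
  push_neg at hc
  simp only [triplets, Finset.mem_powersetCard]
  exact ⟨Finset.subset_univ _,
    Finset.card_eq_three.mpr ⟨a, b, c, hab, Ne.symm hc.1, Ne.symm hc.2, rfl⟩⟩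

lemma famSetD_comm (F G : Finset (Finset (Fin n))) : famSetD F G = famSetD G F := by
  unfold famSetD
  apply Finset.filter_congr
  intro X _
  constructor
  · rintro ⟨h1, h2, h3⟩; exact ⟨h2, h1, h3.symm⟩
  · rintro ⟨h1, h2, h3⟩; exact ⟨h2, h1, h3.symm⟩

lemma famTransfer {F G : Finset (Finset (Fin n))}
    (hD : famSetD F G = ∅) (hR1 : famSetR1 F G = ∅)
    {a b c : Fin n} (hab : a ≠ b) (hc : c ∉ ({a, b} : Finset (Fin n)))
    (hF : ∃ D ∈ F, a ∈ D ∧ b ∈ D ∧ c ∉ D) : ∃ D ∈ G, a ∈ D ∧ b ∈ D ∧ c ∉ D := by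
  have hX := triplet_mem hab hc
  have hres : famResolved F {a, b, c} := famResolved_of_witness hab hF
  have hresG : famResolved G ({a, b, c} : Finset (Fin n)) := by
    by_contra hres'
    have hmem : ({a, b, c} : Finset (Fin n)) ∈ famSetR1 F G :=
      Finset.mem_filter.mpr ⟨hX, hres, hres'⟩
    rw [hR1] at hmem
    exact absurd hmem (Finset.notMem_empty _)
  have heq : famRestrict F {a, b, c} = famRestrict G {a, b, c} := by
    by_contra hne
    have hmem : ({a, b, c} : Finset (Fin n)) ∈ famSetD F G :=
      Finset.mem_filter.mpr ⟨hX, hres, hresG, hne⟩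
    rw [hD] at hmem
    exact absurd hmem (Finset.notMem_empty _)
  have hmem := (pair_mem_famRestrict (F := F) hc).mpr hF
  rw [heq] at hmem
  exact (pair_mem_famRestrict hc).mp hmem

lemma rtree_clusters_subset {T₁ T₂ : RTree n}
    (h : ∀ a b c : Fin n, a ≠ b → c ∉ ({a, b} : Finset (Fin n)) →
      (∃ D ∈ T₁.clusters, a ∈ D ∧ b ∈ D ∧ c ∉ D) →
      ∃ D ∈ T₂.clusters, a ∈ D ∧ b ∈ D ∧ c ∉ D) :
    T₁.clusters ⊆ T₂.clusters := by
  intro C hC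
  by_cases hU : C = Finset.univ
  · exact hU ▸ T₂.univ_mem
  by_cases h1 : C.card = 1
  · obtain ⟨x, rfl⟩ := Finset.card_eq_one.mp h1
    exact T₂.singleton_mem x
  have hC0 : C.Nonempty := Finset.nonempty_of_ne_empty fun h0 => T₁.empty_not_mem (h0 ▸ hC)
  have h2 : 1 < C.card := by
    have := Finset.card_pos.mpr hC0
    omega
  have hkey : ∀ a ∈ C, ∀ b ∈ C, a ≠ b → ∀ c, c ∉ C →
      ∃ D ∈ T₂.clusters, a ∈ D ∧ b ∈ D ∧ c ∉ D := by
    intro a ha b hb hab c hcC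
    refine h a b c hab ?_ ⟨C, hC, ha, hb, hcC⟩
    simp only [Finset.mem_insert, Finset.mem_singleton]
    rintro (rfl | rfl)
    · exact hcC ha
    · exact hcC hb
  obtain ⟨a, ha, -, -, -⟩ := Finset.one_lt_card.mp h2
  have hsne : (T₂.clusters.filter fun D => D ⊆ C ∧ a ∈ D).Nonempty :=
    ⟨{a}, Finset.mem_filter.mpr ⟨T₂.singleton_mem a, Finset.singleton_subset_iff.mpr ha,
      Finset.mem_singleton_self a⟩⟩
  have hsch : ∀ D ∈ T₂.clusters.filter fun D => D ⊆ C ∧ a ∈ D,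
      ∀ E ∈ T₂.clusters.filter fun D => D ⊆ C ∧ a ∈ D, D ⊆ E ∨ E ⊆ D := by
    intro D hD E hE
    obtain ⟨hD', -, haD⟩ := Finset.mem_filter.mp hD
    obtain ⟨hE', -, haE⟩ := Finset.mem_filter.mp hE
    rcases T₂.laminar D hD' E hE' with h' | h' | h'
    · exact Or.inl h'
    · exact Or.inr h'
    · exact absurd h'
        (Finset.nonempty_iff_ne_empty.mp ⟨a, Finset.mem_inter.mpr ⟨haD, haE⟩⟩)
  obtain ⟨M, hM, hMmax⟩ := exists_max_subset _ hsne hsch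
  obtain ⟨hMcl, hMC, haM⟩ := Finset.mem_filter.mp hM
  have hCM : C ⊆ M := by
    intro b hb
    by_cases hba : b = a
    · exact hba ▸ haM
    have htne : (T₂.clusters.filter fun D => a ∈ D ∧ b ∈ D).Nonempty :=
      ⟨Finset.univ, Finset.mem_filter.mpr ⟨T₂.univ_mem, Finset.mem_univ a, Finset.mem_univ b⟩⟩
    have htch : ∀ D ∈ T₂.clusters.filter fun D => a ∈ D ∧ b ∈ D,
        ∀ E ∈ T₂.clusters.filter fun D => a ∈ D ∧ b ∈ D, D ⊆ E ∨ E ⊆ D := by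
      intro D hD E hE
      obtain ⟨hD', haD, -⟩ := Finset.mem_filter.mp hD
      obtain ⟨hE', haE, -⟩ := Finset.mem_filter.mp hE
      rcases T₂.laminar D hD' E hE' with h' | h' | h'
      · exact Or.inl h'
      · exact Or.inr h'
      · exact absurd h'
          (Finset.nonempty_iff_ne_empty.mp ⟨a, Finset.mem_inter.mpr ⟨haD, haE⟩⟩)
    obtain ⟨m, hm, hmmin⟩ := exists_min_subset _ htne htch
    obtain ⟨hmcl, ham, hbm⟩ := Finset.mem_filter.mp hm
    have hmC : m ⊆ C := by
      intro e he
      by_contra heC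
      obtain ⟨D, hD', haD, hbD, heD⟩ := hkey a ha b hb (Ne.symm hba) e heC
      exact heD (hmmin D (Finset.mem_filter.mpr ⟨hD', haD, hbD⟩) he)
    exact hMmax m (Finset.mem_filter.mpr ⟨hmcl, hmC, ham⟩) hbm
  exact (Finset.Subset.antisymm hMC hCM) ▸ hMcl

lemma famPdist_eq_sum (p : ℝ) (F G : Finset (Finset (Fin n))) :
    famPdist p F G = ∑ X ∈ triplets n,
      ((if famResolved F X ∧ famResolved G X ∧ famRestrict F X ≠ famRestrict G X
          then (1:ℝ) else 0)
        + p * ((if famResolved F X ∧ ¬ famResolved G X then (1:ℝ) else 0)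
          + (if famResolved G X ∧ ¬ famResolved F X then (1:ℝ) else 0))) := by
  unfold famPdist famSetD famSetR1 famSetR2
  rw [Finset.sum_add_distrib, ← Finset.mul_sum, Finset.sum_add_distrib,
    card_filter_real, card_filter_real, card_filter_real]

lemma famPdist_triangle (p : ℝ) (hp0 : 1/2 ≤ p) (hp1 : p ≤ 1)
    (F G H : Finset (Finset (Fin n))) :
    famPdist p F H ≤ famPdist p F G + famPdist p G H := by
  rw [famPdist_eq_sum, famPdist_eq_sum, famPdist_eq_sum, ← Finset.sum_add_distrib]
  exact Finset.sum_le_sum fun X _ => ind_tri p hp0 hp1 _ _ _ _ _ _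

lemma famPdist_nonneg (p : ℝ) (hp : 0 ≤ p) (F G : Finset (Finset (Fin n))) :
    0 ≤ famPdist p F G := by
  unfold famPdist
  positivity

lemma famPdist_symm (p : ℝ) (F G : Finset (Finset (Fin n))) :
    famPdist p F G = famPdist p G F := by
  unfold famPdist
  rw [famSetD_comm, show famSetR1 G F = famSetR2 F G from rfl,
    show famSetR2 G F = famSetR1 F G from rfl]
  ring

lemma famPdist_self (p : ℝ) (F : Finset (Finset (Fin n))) : famPdist p F F = 0 := by
  unfold famPdist
  have h1 : famSetD F F = ∅ := by
    unfold famSetD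
    apply Finset.filter_false_of_mem
    intro X _ hX
    exact hX.2.2 rfl
  have h2 : famSetR1 F F = ∅ := by
    unfold famSetR1
    apply Finset.filter_false_of_mem
    intro X _ hX
    exact hX.2 hX.1
  have h3 : famSetR2 F F = ∅ := by
    unfold famSetR2
    apply Finset.filter_false_of_mem
    intro X _ hX
    exact hX.2 hX.1
  rw [h1, h2, h3]
  simp

lemma rtree_pdist_eq_zero_iff {p : ℝ} (hp : 1/2 ≤ p) (T₁ T₂ : RTree n) :
    RTree.pdist p T₁ T₂ = 0 ↔ T₁ = T₂ := by
  constructor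
  · intro h
    have hp' : (0:ℝ) < p := by linarith
    have h' : ((famSetD T₁.clusters T₂.clusters).card : ℝ)
        + p * (((famSetR1 T₁.clusters T₂.clusters).card : ℝ)
          + ((famSetR2 T₁.clusters T₂.clusters).card : ℝ)) = 0 := h
    obtain ⟨hDc, hR1c, hR2c⟩ := zero_aux hp' (Nat.cast_nonneg _) (Nat.cast_nonneg _)
      (Nat.cast_nonneg _) h'
    have hD : famSetD T₁.clusters T₂.clusters = ∅ :=
      Finset.card_eq_zero.mp (Nat.cast_eq_zero.mp hDc)
    have hR1 : famSetR1 T₁.clusters T₂.clusters = ∅ :=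
      Finset.card_eq_zero.mp (Nat.cast_eq_zero.mp hR1c)
    have hR2 : famSetR2 T₁.clusters T₂.clusters = ∅ :=
      Finset.card_eq_zero.mp (Nat.cast_eq_zero.mp hR2c)
    have hD' : famSetD T₂.clusters T₁.clusters = ∅ := by rw [famSetD_comm]; exact hD
    have hR1' : famSetR1 T₂.clusters T₁.clusters = ∅ := hR2
    apply RTree.clusters_injective
    apply Finset.Subset.antisymm
    · exact rtree_clusters_subset fun a b c hab hc => famTransfer hD hR1 hab hc
    · exact rtree_clusters_subset fun a b c hab hc => famTransfer hD' hR1' hab hc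
  · rintro rfl
    exact famPdist_self p T₁.clusters

/-! ### Unrooted case -/

lemma inter_quartet_eq_pair {D : Finset (Fin n)} {a b c d : Fin n}
    (haD : a ∈ D) (hbD : b ∈ D) (hcD : c ∉ D) (hdD : d ∉ D) :
    D ∩ {a, b, c, d} = {a, b} := by
  ext x
  simp only [Finset.mem_inter, Finset.mem_insert, Finset.mem_singleton]
  constructor
  · rintro ⟨hxD, rfl | rfl | rfl | rfl⟩
    · exact Or.inl rfl
    · exact Or.inr rfl
    · exact absurd hxD hcD
    · exact absurd hxD hdD
  · rintro (rfl | rfl)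
    · exact ⟨haD, Or.inl rfl⟩
    · exact ⟨hbD, Or.inr (Or.inl rfl)⟩

lemma pair_mem_famRestrictU {F : Finset (Finset (Fin n))} {a b c d : Fin n}
    (hc : c ∉ ({a, b} : Finset (Fin n))) (hd : d ∉ ({a, b} : Finset (Fin n))) :
    ({a, b} : Finset (Fin n)) ∈ famRestrictU F {a, b, c, d} ↔
      ∃ D ∈ F, a ∈ D ∧ b ∈ D ∧ c ∉ D ∧ d ∉ D := by
  unfold famRestrictU
  simp only [Finset.mem_filter, Finset.mem_image]
  constructor
  · rintro ⟨⟨D, hD, hDX⟩, -⟩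
    refine ⟨D, hD, ?_, ?_, fun hcD => ?_, fun hdD => ?_⟩
    · have h' : a ∈ D ∩ ({a, b, c, d} : Finset (Fin n)) := by rw [hDX]; simp
      exact (Finset.mem_inter.mp h').1
    · have h' : b ∈ D ∩ ({a, b, c, d} : Finset (Fin n)) := by rw [hDX]; simp
      exact (Finset.mem_inter.mp h').1
    · have h' : c ∈ D ∩ ({a, b, c, d} : Finset (Fin n)) := Finset.mem_inter.mpr ⟨hcD, by simp⟩
      rw [hDX] at h'
      exact hc h'
    · have h' : d ∈ D ∩ ({a, b, c, d} : Finset (Fin n)) := Finset.mem_inter.mpr ⟨hdD, by simp⟩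
      rw [hDX] at h'
      exact hd h'
  · rintro ⟨D, hD, haD, hbD, hcD, hdD⟩
    refine ⟨⟨D, hD, inter_quartet_eq_pair haD hbD hcD hdD⟩, by simp, fun hXeq => ?_⟩
    have : c ∈ ({a, b} : Finset (Fin n)) := by
      rw [hXeq]; simp
    exact hc this

lemma famResolvedU_of_witness {F : Finset (Finset (Fin n))} {a b c d : Fin n} (hab : a ≠ b)
    (hW : ∃ D ∈ F, a ∈ D ∧ b ∈ D ∧ c ∉ D ∧ d ∉ D) : famResolvedU F {a, b, c, d} := by
  obtain ⟨D, hD, haD, hbD, hcD, hdD⟩ := hW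
  exact ⟨D, hD, by rw [inter_quartet_eq_pair haD hbD hcD hdD, Finset.card_pair hab]⟩

lemma quartet_mem {a b c d : Fin n} (hab : a ≠ b) (hcd : c ≠ d)
    (hc : c ∉ ({a, b} : Finset (Fin n))) (hd : d ∉ ({a, b} : Finset (Fin n))) :
    ({a, b, c, d} : Finset (Fin n)) ∈ quartets n := by
  simp only [Finset.mem_insert, Finset.mem_singleton] at hc hd
  push_neg at hc hd
  simp only [quartets, Finset.mem_powersetCard]
  refine ⟨Finset.subset_univ _, ?_⟩
  rw [Finset.card_insert_of_notMem, Finset.card_insert_of_notMem, Finset.card_pair hcd]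
  · simp only [Finset.mem_insert, Finset.mem_singleton]
    push_neg
    exact ⟨Ne.symm hc.2, Ne.symm hd.2⟩
  · simp only [Finset.mem_insert, Finset.mem_singleton]
    push_neg
    exact ⟨hab, Ne.symm hc.1, Ne.symm hd.1⟩

lemma famSetDU_comm (F G : Finset (Finset (Fin n))) : famSetDU F G = famSetDU G F := by
  unfold famSetDU
  apply Finset.filter_congr
  intro X _
  constructor
  · rintro ⟨h1, h2, h3⟩; exact ⟨h2, h1, h3.symm⟩
  · rintro ⟨h1, h2, h3⟩; exact ⟨h2, h1, h3.symm⟩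

lemma famTransferU {F G : Finset (Finset (Fin n))}
    (hD : famSetDU F G = ∅) (hR1 : famSetR1U F G = ∅)
    {a b c d : Fin n} (hab : a ≠ b) (hcd : c ≠ d)
    (hc : c ∉ ({a, b} : Finset (Fin n))) (hd : d ∉ ({a, b} : Finset (Fin n)))
    (hF : ∃ D ∈ F, a ∈ D ∧ b ∈ D ∧ c ∉ D ∧ d ∉ D) :
    ∃ D ∈ G, a ∈ D ∧ b ∈ D ∧ c ∉ D ∧ d ∉ D := by
  have hX := quartet_mem hab hcd hc hd
  have hres : famResolvedU F {a, b, c, d} := famResolvedU_of_witness hab hF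
  have hresG : famResolvedU G ({a, b, c, d} : Finset (Fin n)) := by
    by_contra hres'
    have hmem : ({a, b, c, d} : Finset (Fin n)) ∈ famSetR1U F G :=
      Finset.mem_filter.mpr ⟨hX, hres, hres'⟩
    rw [hR1] at hmem
    exact absurd hmem (Finset.notMem_empty _)
  have heq : famRestrictU F {a, b, c, d} = famRestrictU G {a, b, c, d} := by
    by_contra hne
    have hmem : ({a, b, c, d} : Finset (Fin n)) ∈ famSetDU F G :=
      Finset.mem_filter.mpr ⟨hX, hres, hresG, hne⟩
    rw [hD] at hmem
    exact absurd hmem (Finset.notMem_empty _)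
  have hmem := (pair_mem_famRestrictU (F := F) hc hd).mpr hF
  rw [heq] at hmem
  exact (pair_mem_famRestrictU hc hd).mp hmem

lemma utree_univ_not_mem (T : UTree n) : (Finset.univ : Finset (Fin n)) ∉ T.splits := by
  intro h
  have := T.compl_mem _ h
  rw [Finset.sdiff_self] at this
  exact T.empty_not_mem this

lemma utree_splits_subset {T₁ T₂ : UTree n}
    (h : ∀ a b c d : Fin n, a ≠ b → c ≠ d →
      c ∉ ({a, b} : Finset (Fin n)) → d ∉ ({a, b} : Finset (Fin n)) →
      (∃ D ∈ T₁.splits, a ∈ D ∧ b ∈ D ∧ c ∉ D ∧ d ∉ D) →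
      ∃ D ∈ T₂.splits, a ∈ D ∧ b ∈ D ∧ c ∉ D ∧ d ∉ D) :
    T₁.splits ⊆ T₂.splits := by
  intro A hA
  have hA0 : A.Nonempty := Finset.nonempty_of_ne_empty fun h0 => T₁.empty_not_mem (h0 ▸ hA)
  have hAU : A ≠ Finset.univ := fun hU => utree_univ_not_mem T₁ (hU ▸ hA)
  have hAc0 : (Finset.univ \ A).Nonempty := by
    rw [Finset.sdiff_nonempty]
    intro hsub
    exact hAU (Finset.univ_subset_iff.mp hsub)
  by_cases h1 : A.card = 1
  · obtain ⟨x, rfl⟩ := Finset.card_eq_one.mp h1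
    rcases T₂.trivial_mem x with hx | hx
    · exact absurd hx hAU
    · exact hx
  by_cases h1' : (Finset.univ \ A).card = 1
  · obtain ⟨x, hx⟩ := Finset.card_eq_one.mp h1'
    have hAeq : A = Finset.univ \ {x} := by
      rw [← hx]
      exact (Finset.sdiff_sdiff_eq_self (Finset.subset_univ A)).symm
    have hxu : ({x} : Finset (Fin n)) ≠ Finset.univ := by
      intro hxU
      rw [hAeq, hxU, Finset.sdiff_self] at hA0
      exact Finset.not_nonempty_empty hA0
    rcases T₂.trivial_mem x with hx' | hx'
    · exact absurd hx' hxu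
    · rw [hAeq]
      exact T₂.compl_mem _ hx'
  have h2 : 1 < A.card := by
    have := Finset.card_pos.mpr hA0
    omega
  have h2' : 1 < (Finset.univ \ A).card := by
    have := Finset.card_pos.mpr hAc0
    omega
  obtain ⟨c, hcmem, d₀, hd₀mem, hcd₀⟩ := Finset.one_lt_card.mp h2'
  have hcA : c ∉ A := (Finset.mem_sdiff.mp hcmem).2
  have hd₀A : d₀ ∉ A := (Finset.mem_sdiff.mp hd₀mem).2
  have hkey : ∀ a ∈ A, ∀ b ∈ A, a ≠ b → ∀ e f, e ∉ A → f ∉ A → e ≠ f →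
      ∃ D ∈ T₂.splits, a ∈ D ∧ b ∈ D ∧ e ∉ D ∧ f ∉ D := by
    intro a ha b hb hab e f heA hfA hef
    refine h a b e f hab hef ?_ ?_ ⟨A, hA, ha, hb, heA, hfA⟩
    · simp only [Finset.mem_insert, Finset.mem_singleton]
      rintro (rfl | rfl)
      · exact heA ha
      · exact heA hb
    · simp only [Finset.mem_insert, Finset.mem_singleton]
      rintro (rfl | rfl)
      · exact hfA ha
      · exact hfA hb
  obtain ⟨a, ha, -, -, -⟩ := Finset.one_lt_card.mp h2
  have hau : ({a} : Finset (Fin n)) ≠ Finset.univ := by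
    intro haU
    have : c ∈ ({a} : Finset (Fin n)) := haU ▸ Finset.mem_univ c
    rw [Finset.mem_singleton] at this
    exact hcA (this ▸ ha)
  have haS : ({a} : Finset (Fin n)) ∈ T₂.splits := by
    rcases T₂.trivial_mem a with hx | hx
    · exact absurd hx hau
    · exact hx
  have hsne : (T₂.splits.filter fun D => D ⊆ A ∧ a ∈ D).Nonempty :=
    ⟨{a}, Finset.mem_filter.mpr ⟨haS, Finset.singleton_subset_iff.mpr ha,
      Finset.mem_singleton_self a⟩⟩
  have hsch : ∀ D ∈ T₂.splits.filter fun D => D ⊆ A ∧ a ∈ D,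
      ∀ E ∈ T₂.splits.filter fun D => D ⊆ A ∧ a ∈ D, D ⊆ E ∨ E ⊆ D := by
    intro D hD E hE
    obtain ⟨hD', hDA, haD⟩ := Finset.mem_filter.mp hD
    obtain ⟨hE', hEA, haE⟩ := Finset.mem_filter.mp hE
    rcases T₂.compat D hD' E hE' with h' | h' | h' | h'
    · exact Or.inl h'
    · exact Or.inr h'
    · exact absurd h'
        (Finset.nonempty_iff_ne_empty.mp ⟨a, Finset.mem_inter.mpr ⟨haD, haE⟩⟩)
    · exfalso
      have hcDE : c ∈ D ∪ E := h' ▸ Finset.mem_univ c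
      rcases Finset.mem_union.mp hcDE with h'' | h''
      · exact hcA (hDA h'')
      · exact hcA (hEA h'')
  obtain ⟨M, hM, hMmax⟩ := exists_max_subset _ hsne hsch
  obtain ⟨hMcl, hMA, haM⟩ := Finset.mem_filter.mp hM
  have hAM : A ⊆ M := by
    intro b hb
    by_cases hba : b = a
    · exact hba ▸ haM
    have htne : (T₂.splits.filter fun D => a ∈ D ∧ b ∈ D ∧ c ∉ D).Nonempty := by
      obtain ⟨D, hD', haD, hbD, hcD, -⟩ := hkey a ha b hb (Ne.symm hba) c d₀ hcA hd₀A hcd₀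
      exact ⟨D, Finset.mem_filter.mpr ⟨hD', haD, hbD, hcD⟩⟩
    have htch : ∀ D ∈ T₂.splits.filter fun D => a ∈ D ∧ b ∈ D ∧ c ∉ D,
        ∀ E ∈ T₂.splits.filter fun D => a ∈ D ∧ b ∈ D ∧ c ∉ D, D ⊆ E ∨ E ⊆ D := by
      intro D hD E hE
      obtain ⟨hD', haD, -, hcD⟩ := Finset.mem_filter.mp hD
      obtain ⟨hE', haE, -, hcE⟩ := Finset.mem_filter.mp hE
      rcases T₂.compat D hD' E hE' with h' | h' | h' | h'
      · exact Or.inl h'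
      · exact Or.inr h'
      · exact absurd h'
          (Finset.nonempty_iff_ne_empty.mp ⟨a, Finset.mem_inter.mpr ⟨haD, haE⟩⟩)
      · exfalso
        have hcDE : c ∈ D ∪ E := h' ▸ Finset.mem_univ c
        rcases Finset.mem_union.mp hcDE with h'' | h''
        · exact hcD h''
        · exact hcE h''
    obtain ⟨m, hm, hmmin⟩ := exists_min_subset _ htne htch
    obtain ⟨hmcl, ham, hbm, hcm⟩ := Finset.mem_filter.mp hm
    have hmA : m ⊆ A := by
      intro e he
      by_contra heA
      by_cases hec : e = c
      · exact hcm (hec ▸ he)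
      obtain ⟨D, hD', haD, hbD, hcD, heD⟩ :=
        hkey a ha b hb (Ne.symm hba) c e hcA heA (Ne.symm hec)
      exact heD (hmmin D (Finset.mem_filter.mpr ⟨hD', haD, hbD, hcD⟩) he)
    exact hMmax m (Finset.mem_filter.mpr ⟨hmcl, hmA, ham⟩) hbm
  exact (Finset.Subset.antisymm hMA hAM) ▸ hMcl

lemma famPdistU_eq_sum (p : ℝ) (F G : Finset (Finset (Fin n))) :
    famPdistU p F G = ∑ X ∈ quartets n,
      ((if famResolvedU F X ∧ famResolvedU G X ∧ famRestrictU F X ≠ famRestrictU G X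
          then (1:ℝ) else 0)
        + p * ((if famResolvedU F X ∧ ¬ famResolvedU G X then (1:ℝ) else 0)
          + (if famResolvedU G X ∧ ¬ famResolvedU F X then (1:ℝ) else 0))) := by
  unfold famPdistU famSetDU famSetR1U famSetR2U
  rw [Finset.sum_add_distrib, ← Finset.mul_sum, Finset.sum_add_distrib,
    card_filter_real, card_filter_real, card_filter_real]

lemma famPdistU_triangle (p : ℝ) (hp0 : 1/2 ≤ p) (hp1 : p ≤ 1)
    (F G H : Finset (Finset (Fin n))) :
    famPdistU p F H ≤ famPdistU p F G + famPdistU p G H := by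
  rw [famPdistU_eq_sum, famPdistU_eq_sum, famPdistU_eq_sum, ← Finset.sum_add_distrib]
  exact Finset.sum_le_sum fun X _ => ind_tri p hp0 hp1 _ _ _ _ _ _

lemma famPdistU_nonneg (p : ℝ) (hp : 0 ≤ p) (F G : Finset (Finset (Fin n))) :
    0 ≤ famPdistU p F G := by
  unfold famPdistU
  positivity

lemma famPdistU_symm (p : ℝ) (F G : Finset (Finset (Fin n))) :
    famPdistU p F G = famPdistU p G F := by
  unfold famPdistU
  rw [famSetDU_comm, show famSetR1U G F = famSetR2U F G from rfl,
    show famSetR2U G F = famSetR1U F G from rfl]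
  ring

lemma famPdistU_self (p : ℝ) (F : Finset (Finset (Fin n))) : famPdistU p F F = 0 := by
  unfold famPdistU
  have h1 : famSetDU F F = ∅ := by
    unfold famSetDU
    apply Finset.filter_false_of_mem
    intro X _ hX
    exact hX.2.2 rfl
  have h2 : famSetR1U F F = ∅ := by
    unfold famSetR1U
    apply Finset.filter_false_of_mem
    intro X _ hX
    exact hX.2 hX.1
  have h3 : famSetR2U F F = ∅ := by
    unfold famSetR2U
    apply Finset.filter_false_of_mem
    intro X _ hX
    exact hX.2 hX.1
  rw [h1, h2, h3]
  simp

lemma utree_pdist_eq_zero_iff {p : ℝ} (hp : 1/2 ≤ p) (T₁ T₂ : UTree n) :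
    UTree.pdist p T₁ T₂ = 0 ↔ T₁ = T₂ := by
  constructor
  · intro h
    have hp' : (0:ℝ) < p := by linarith
    have h' : ((famSetDU T₁.splits T₂.splits).card : ℝ)
        + p * (((famSetR1U T₁.splits T₂.splits).card : ℝ)
          + ((famSetR2U T₁.splits T₂.splits).card : ℝ)) = 0 := h
    obtain ⟨hDc, hR1c, hR2c⟩ := zero_aux hp' (Nat.cast_nonneg _) (Nat.cast_nonneg _)
      (Nat.cast_nonneg _) h'
    have hD : famSetDU T₁.splits T₂.splits = ∅ :=
      Finset.card_eq_zero.mp (Nat.cast_eq_zero.mp hDc)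
    have hR1 : famSetR1U T₁.splits T₂.splits = ∅ :=
      Finset.card_eq_zero.mp (Nat.cast_eq_zero.mp hR1c)
    have hR2 : famSetR2U T₁.splits T₂.splits = ∅ :=
      Finset.card_eq_zero.mp (Nat.cast_eq_zero.mp hR2c)
    have hD' : famSetDU T₂.splits T₁.splits = ∅ := by rw [famSetDU_comm]; exact hD
    have hR1' : famSetR1U T₂.splits T₁.splits = ∅ := hR2
    apply UTree.splits_injective
    apply Finset.Subset.antisymm
    · exact utree_splits_subset fun a b c d hab hcd hc hd => famTransferU hD hR1 hab hcd hc hd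
    · exact utree_splits_subset fun a b c d hab hcd hc hd => famTransferU hD' hR1' hab hcd hc hd
  · rintro rfl
    exact famPdistU_self p T₁.splits

end AuxMetric

/-- **Theorem (part (iii)).**  For every `p ∈ [1/2, 1]`, the parametric triplet
(resp. quartet) distance `d⁽ᵖ⁾` is a metric on the set of all rooted
(resp. unrooted) phylogenies over a fixed taxon set: it is a distance measure
(nonnegative, symmetric, vanishing exactly on equal pairs) and it satisfies the
triangle inequality. -/
theorem pdist_metric (n : ℕ) (p : ℝ) (hp0 : 1 / 2 ≤ p) (hp1 : p ≤ 1) :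
    ((∀ T₁ T₂ : RTree n,
        0 ≤ RTree.pdist p T₁ T₂ ∧ RTree.pdist p T₁ T₂ = RTree.pdist p T₂ T₁ ∧
          (RTree.pdist p T₁ T₂ = 0 ↔ T₁ = T₂)) ∧
      ∀ T₁ T₂ T₃ : RTree n,
        RTree.pdist p T₁ T₃ ≤ RTree.pdist p T₁ T₂ + RTree.pdist p T₂ T₃) ∧
    (∀ T₁ T₂ : UTree n,
        0 ≤ UTree.pdist p T₁ T₂ ∧ UTree.pdist p T₁ T₂ = UTree.pdist p T₂ T₁ ∧
          (UTree.pdist p T₁ T₂ = 0 ↔ T₁ = T₂)) ∧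
      ∀ T₁ T₂ T₃ : UTree n,
        UTree.pdist p T₁ T₃ ≤ UTree.pdist p T₁ T₂ + UTree.pdist p T₂ T₃ := by
  have hp : (0:ℝ) ≤ p := by linarith
  refine ⟨⟨fun T₁ T₂ => ⟨famPdist_nonneg p hp _ _, famPdist_symm p _ _,
      rtree_pdist_eq_zero_iff hp0 T₁ T₂⟩,
    fun T₁ T₂ T₃ => famPdist_triangle p hp0 hp1 _ _ _⟩,
    ⟨fun T₁ T₂ => ⟨famPdistU_nonneg p hp _ _, famPdistU_symm p _ _,
      utree_pdist_eq_zero_iff hp0 T₁ T₂⟩,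
    fun T₁ T₂ T₃ => famPdistU_triangle p hp0 hp1 _ _ _⟩⟩
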